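/- Kronecker's theorem: if M is a square integer matrix all of whose complex eigenvalues have absolute value 1 and M is invertible over ℤ, then every eigenvalue of M is a root of unity. -/

import Mathlib

open Matrix Polynomial IntermediateField

theorem kronecker_theorem (n : ℕ) (M : Matrix (Fin n) (Fin n) ℤ)
    (hMunit : IsUnit M.det)
    (habs : ∀ z : ℂ, (aeval z) M.charpoly = 0 → ‖z‖ = 1) :
    ∀ z : ℂ, (aeval z) M.charpoly = 0 → ∃ k : ℕ, 0 < k ∧ z ^ k = 1 := by
  intro z hz
  have hint : IsIntegral ℤ z := ⟨M.charpoly, M.charpoly_monic, hz⟩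
  have hQ : IsIntegral ℚ z := hint.tower_top
  let K := ℚ⟮z⟯
  haveI : FiniteDimensional ℚ K := IntermediateField.adjoin.finiteDimensional hQ
  haveI : NumberField K := ⟨⟩
  set x : K := IntermediateField.AdjoinSimple.gen ℚ z with hx
  have halg : algebraMap K ℂ x = z := rfl
  have hxi : IsIntegral ℤ x := by
    rwa [← isIntegral_algebraMap_iff (algebraMap K ℂ).injective, halg]
  have hdvd : minpoly ℤ z ∣ M.charpoly := minpoly.isIntegrallyClosed_dvd hint hz
  have hnorm : ∀ φ : K →+* ℂ, ‖φ x‖ = 1 := by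
    intro φ
    have hmem : φ x ∈ (minpoly ℚ x).rootSet ℂ := by
      rw [← NumberField.Embeddings.range_eval_eq_rootSet_minpoly K ℂ x]
      exact ⟨φ, rfl⟩
    have hroot : (aeval (φ x)) (minpoly ℚ x) = 0 := (mem_rootSet.mp hmem).2
    rw [show minpoly ℚ x = minpoly ℚ z from IntermediateField.minpoly_gen (F := ℚ) z,
      minpoly.isIntegrallyClosed_eq_field_fractions' ℚ hint] at hroot
    have hroot' : (aeval (φ x)) (minpoly ℤ z) = 0 := by
      rwa [aeval_map_algebraMap] at hroot
    obtain ⟨q, hq⟩ := hdvd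
    have : (aeval (φ x)) M.charpoly = 0 := by
      rw [hq, _root_.map_mul, hroot', zero_mul]
    simpa using habs _ this
  obtain ⟨k, hk, hxk⟩ := NumberField.Embeddings.pow_eq_one_of_norm_eq_one K ℂ hxi hnorm
  refine ⟨k, hk, ?_⟩
  have := congrArg (algebraMap K ℂ) hxk
  rwa [map_pow, halg, _root_.map_one] at this
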